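/- Let f : ℝⁿ → ℝ be quadratic with Hessian ∇²f, and suppose Q* minimizes ‖∇²Q − ∇²Q_α‖_F over quadratics Q interpolating f on X. Write H_F = {∇²Q : Q interpolates f on X}, an affine subspace of symmetric matrices containing ∇²f. Then ∇²Q* − ∇²Q_α is orthogonal (in Frobenius inner product) to the direction space of H_F, and consequently ‖∇²Q_α − ∇²f‖_F² = ‖∇²Q_α − ∇²Q*‖_F² + ‖∇²Q* − ∇²f‖_F² (a Pythagoras identity), which strengthens the projection inequality ‖∇²Q* − ∇²f‖_F ≤ ‖∇²Q_α − ∇²f‖_F. -/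

import Mathlib

structure Quad (n : ℕ) where
  c : ℝ
  g : Fin n → ℝ
  A : Matrix (Fin n) (Fin n) ℝ
  symm : A.IsSymm

namespace Quad
variable {n : ℕ}

noncomputable def eval (Q : Quad n) (x : Fin n → ℝ) : ℝ :=
  Q.c + (∑ i, Q.g i * x i) + (1 / 2) * ∑ i, ∑ j, x i * Q.A i j * x j

def add (P Q : Quad n) : Quad n :=
  ⟨P.c + Q.c, P.g + Q.g, P.A + Q.A, P.symm.add Q.symm⟩

def sub (P Q : Quad n) : Quad n :=
  ⟨P.c - Q.c, P.g - Q.g, P.A - Q.A, P.symm.sub Q.symm⟩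

def smul (r : ℝ) (Q : Quad n) : Quad n :=
  ⟨r * Q.c, r • Q.g, r • Q.A, by
    simp only [Matrix.IsSymm, Matrix.transpose_smul, Q.symm.eq]⟩

def addConst (Q : Quad n) (r : ℝ) : Quad n := ⟨Q.c + r, Q.g, Q.A, Q.symm⟩

protected def zero : Quad n := ⟨0, 0, 0, by simp [Matrix.IsSymm]⟩

end Quad

noncomputable def frobSq {n : ℕ} (M : Matrix (Fin n) (Fin n) ℝ) : ℝ := ∑ i, ∑ j, (M i j) ^ 2

def Interpolates {n m : ℕ} (Q : Quad n) (h : (Fin n → ℝ) → ℝ)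
    (x : Fin m → (Fin n → ℝ)) : Prop :=
  ∀ i, Q.eval (x i) = h (x i)

def IsLFNModel {n m : ℕ} (B : Quad n) (h : (Fin n → ℝ) → ℝ)
    (x : Fin m → (Fin n → ℝ)) (Q : Quad n) : Prop :=
  Interpolates Q h x ∧
    ∀ Q' : Quad n, Interpolates Q' h x → frobSq (Q.A - B.A) ≤ frobSq (Q'.A - B.A)

/-- Frobenius inner product of matrices. -/
noncomputable def frobInner {n : ℕ} (M N : Matrix (Fin n) (Fin n) ℝ) : ℝ :=
  ∑ i, ∑ j, M i j * N i j

lemma eval_affine {n : ℕ} (P Q : Quad n) (t : ℝ) (x : Fin n → ℝ) :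
    (P.add (Quad.smul t (Q.sub P))).eval x = P.eval x + t * (Q.eval x - P.eval x) := by
  have hg : ∀ i, (P.g + t • (Q.g - P.g)) i * x i
      = P.g i * x i + (t * (Q.g i * x i) - t * (P.g i * x i)) := by
    intro i
    simp only [Pi.add_apply, Pi.smul_apply, Pi.sub_apply, smul_eq_mul]
    ring
  have hA : ∀ i j, x i * (P.A + t • (Q.A - P.A)) i j * x j
      = x i * P.A i j * x j + (t * (x i * Q.A i j * x j) - t * (x i * P.A i j * x j)) := by
    intro i j
    simp only [Matrix.add_apply, Matrix.smul_apply, Matrix.sub_apply, smul_eq_mul]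
    ring
  simp only [Quad.eval, Quad.add, Quad.smul, Quad.sub]
  rw [Finset.sum_congr rfl fun i _ => hg i,
      Finset.sum_congr rfl fun i _ => Finset.sum_congr rfl fun j _ => hA i j]
  simp only [Finset.sum_add_distrib, Finset.sum_sub_distrib, ← Finset.mul_sum]
  ring

lemma frobSq_nonneg {n : ℕ} (M : Matrix (Fin n) (Fin n) ℝ) : 0 ≤ frobSq M := by
  apply Finset.sum_nonneg; intro i _; apply Finset.sum_nonneg; intro j _; positivity

lemma frobSq_expand {n : ℕ} (D E : Matrix (Fin n) (Fin n) ℝ) (t : ℝ) :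
    frobSq (D + t • E) = frobSq D + 2 * t * frobInner D E + t ^ 2 * frobSq E := by
  have h : ∀ i j, (D + t • E) i j ^ 2
      = D i j ^ 2 + (t * (D i j * E i j) + t * (D i j * E i j) + t ^ 2 * E i j ^ 2) := by
    intro i j
    simp only [Matrix.add_apply, Matrix.smul_apply, smul_eq_mul]
    ring
  simp only [frobSq, frobInner]
  rw [Finset.sum_congr rfl fun i _ => Finset.sum_congr rfl fun j _ => h i j]
  simp only [Finset.sum_add_distrib, ← Finset.mul_sum]
  ring

lemma frobSq_add {n : ℕ} (D E : Matrix (Fin n) (Fin n) ℝ) :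
    frobSq (D + E) = frobSq D + 2 * frobInner D E + frobSq E := by
  have := frobSq_expand D E 1
  simpa using this

lemma quad_zero_of_nonneg (c e : ℝ) (he : 0 ≤ e)
    (h : ∀ t : ℝ, 0 ≤ 2 * t * c + t ^ 2 * e) : c = 0 := by
  have h1 := h (-c / (e + 1))
  have hpos : (0:ℝ) < e + 1 := by linarith
  have hne : e + 1 ≠ 0 := ne_of_gt hpos
  have h2 : 0 ≤ (2 * (-c / (e + 1)) * c + (-c / (e + 1)) ^ 2 * e) * (e + 1) ^ 2 :=
    mul_nonneg h1 (by positivity)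
  have h3 : (2 * (-c / (e + 1)) * c + (-c / (e + 1)) ^ 2 * e) * (e + 1) ^ 2
      = -2 * c ^ 2 * (e + 1) + c ^ 2 * e := by field_simp
  rw [h3] at h2
  have hc2 : c ^ 2 = 0 := by nlinarith [sq_nonneg c]
  exact sq_eq_zero_iff.mp hc2

/-- Pythagoras identity for the least Frobenius norm updating model: if `f` is a
quadratic and `Q*` minimizes `‖∇²Q − ∇²Q_α‖_F` over quadratics interpolating `f`
on `X`, then `∇²Q* − ∇²Q_α` is Frobenius-orthogonal to the direction space of
the affine set of feasible Hessians, and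
`‖∇²Q_α − ∇²f‖² = ‖∇²Q_α − ∇²Q*‖² + ‖∇²Q* − ∇²f‖²`; in particular
`‖∇²Q* − ∇²f‖_F ≤ ‖∇²Q_α − ∇²f‖_F`. -/
theorem lfn_updating_pythagoras
    {n m : ℕ} (x : Fin m → (Fin n → ℝ)) (Qα f Qstar : Quad n)
    (h₁ : Interpolates Qstar f.eval x)
    (h₂ : ∀ Q' : Quad n, Interpolates Q' f.eval x →
      frobSq (Qstar.A - Qα.A) ≤ frobSq (Q'.A - Qα.A)) :
    (∀ Q' : Quad n, Interpolates Q' f.eval x →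
        frobInner (Qstar.A - Qα.A) (Q'.A - Qstar.A) = 0) ∧
      frobSq (Qα.A - f.A) = frobSq (Qα.A - Qstar.A) + frobSq (Qstar.A - f.A) ∧
      Real.sqrt (frobSq (Qstar.A - f.A)) ≤ Real.sqrt (frobSq (Qα.A - f.A)) := by
  have orth : ∀ Q' : Quad n, Interpolates Q' f.eval x →
      frobInner (Qstar.A - Qα.A) (Q'.A - Qstar.A) = 0 := by
    intro Q' hQ'
    apply quad_zero_of_nonneg _ _ (frobSq_nonneg (Q'.A - Qstar.A))
    intro t
    have hint : Interpolates (Qstar.add (Quad.smul t (Q'.sub Qstar))) f.eval x := by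
      intro i
      rw [eval_affine, h₁ i, hQ' i]
      ring
    have hle := h₂ _ hint
    have hA : (Qstar.add (Quad.smul t (Q'.sub Qstar))).A - Qα.A
        = (Qstar.A - Qα.A) + t • (Q'.A - Qstar.A) := by
      simp only [Quad.add, Quad.smul, Quad.sub]
      ext i j
      simp only [Matrix.add_apply, Matrix.smul_apply, Matrix.sub_apply, smul_eq_mul]
      ring
    rw [hA, frobSq_expand] at hle
    linarith
  have hf : Interpolates f f.eval x := fun i => rfl
  have horthf := orth f hf
  have hsplit : Qα.A - f.A = (Qα.A - Qstar.A) + (Qstar.A - f.A) := by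
    ext i j; simp only [Matrix.sub_apply, Matrix.add_apply]; ring
  have hinner : frobInner (Qα.A - Qstar.A) (Qstar.A - f.A) = 0 := by
    have : frobInner (Qα.A - Qstar.A) (Qstar.A - f.A)
        = frobInner (Qstar.A - Qα.A) (f.A - Qstar.A) := by
      simp only [frobInner, Matrix.sub_apply]
      apply Finset.sum_congr rfl; intro i _
      apply Finset.sum_congr rfl; intro j _
      ring
    rw [this, horthf]
  have hpyth : frobSq (Qα.A - f.A) = frobSq (Qα.A - Qstar.A) + frobSq (Qstar.A - f.A) := by
    rw [hsplit, frobSq_add, hinner]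
    ring
  refine ⟨orth, hpyth, ?_⟩
  apply Real.sqrt_le_sqrt
  have := frobSq_nonneg (Qα.A - Qstar.A)
  linarith
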